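/- Let s, y ∈ ℝ^n with sᵀy > 0. Then α* = sᵀs/(sᵀy) is a global minimizer over all nonzero real α of the data least squares objective α ↦ ‖αy − s‖²/α², i.e., for every α ≠ 0 one has ‖α*y − s‖²/(α*)² ≤ ‖αy − s‖²/α². -/

import Mathlib

open RealInnerProductSpace

lemma expand_norm_aux {n : ℕ} (s y : EuclideanSpace ℝ (Fin n)) (α : ℝ) :
    ‖α • y - s‖ ^ 2 = α ^ 2 * ⟪y, y⟫ - 2 * α * ⟪s, y⟫ + ⟪s, s⟫ := by
  rw [@norm_sub_sq_real, norm_smul, mul_pow, Real.norm_eq_abs, sq_abs,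
    real_inner_smul_left, real_inner_comm y s, ← real_inner_self_eq_norm_sq, ← real_inner_self_eq_norm_sq]
  ring

/-- `α* = sᵀs / (sᵀy)` globally minimizes the data least squares objective
`α ↦ ‖α y - s‖² / α²` over nonzero `α`. -/
theorem bb2_minimizes_data_least_squares {n : ℕ} (s y : EuclideanSpace ℝ (Fin n))
    (h : ⟪s, y⟫ > 0) :
    ∀ α : ℝ, α ≠ 0 →
      ‖(⟪s, s⟫ / ⟪s, y⟫) • y - s‖ ^ 2 / (⟪s, s⟫ / ⟪s, y⟫) ^ 2 ≤
        ‖α • y - s‖ ^ 2 / α ^ 2 := by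
  intro α hα
  have hs : s ≠ 0 := by
    rintro rfl
    simp at h
  have ha : (0:ℝ) < ⟪s, s⟫ := by
    rw [real_inner_self_eq_norm_sq]
    exact pow_pos (norm_pos_iff.mpr hs) 2
  rw [expand_norm_aux, expand_norm_aux]
  set a := ⟪s, s⟫
  set b := ⟪s, y⟫
  set c := ⟪y, y⟫ with hc
  have hstar : a / b ≠ 0 := div_ne_zero (ne_of_gt ha) (ne_of_gt h)
  rw [div_le_div_iff₀ (pow_pos (div_pos ha h) 2) (pow_two_pos_of_ne_zero hα)]
  have hb : b ≠ 0 := ne_of_gt h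
  have key : (0:ℝ) ≤ a * (a - α * b) ^ 2 * b ^ 2 := by positivity
  field_simp
  nlinarith [key, sq_nonneg (a - α * b)]
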